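/- Consider the generalized Liénard system ẋ = y − F(x) = P(x,y), ẏ = −g(x) = Q(x,y), where F is C¹ and g is continuous, and set G(x) = ∫₀ˣ g(z) dz. Let s, c₀, c₁ ∈ ℝ and define V₂(x,y) = ( (s(s+1)/2)F(x)² + c₁ s F(x) + 2G(x) + c₀ ) + (sF(x) + c₁)y + y². Then for all (x,y): (∂V₂/∂x)P + (∂V₂/∂y)Q + s·V₂·(∂P/∂x + ∂Q/∂y) = −(s(s+1)(s+2)/2)F(x)²F′(x) − s(s+1)c₁F(x)F′(x) − (s+2)g(x)F(x) − 2sF′(x)G(x) − s c₀ F′(x) − c₁ g(x). In particular, for s = −1 and V₂(x,y) = (−c₁F(x) + 2G(x) + c₀) + (−F(x) + c₁)y + y², this expression equals 2F′(x)G(x) + c₀F′(x) − g(x)F(x) − c₁g(x). -/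

import Mathlib

open MeasureTheory Set

/-- Partial derivative with respect to the first coordinate. -/
noncomputable def pdx (f : ℝ × ℝ → ℝ) (p : ℝ × ℝ) : ℝ := fderiv ℝ f p (1, 0)

/-- Partial derivative with respect to the second coordinate. -/
noncomputable def pdy (f : ℝ × ℝ → ℝ) (p : ℝ × ℝ) : ℝ := fderiv ℝ f p (0, 1)

/-- `γ` is a solution of the planar system `ẋ = P(x,y), ẏ = Q(x,y)`. -/
def IsSolution (P Q : ℝ × ℝ → ℝ) (γ : ℝ → ℝ × ℝ) : Prop :=
  ∀ t, HasDerivAt γ (P (γ t), Q (γ t)) t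

/-- A periodic orbit: a nonconstant periodic solution. -/
def IsPeriodicOrbit (P Q : ℝ × ℝ → ℝ) (γ : ℝ → ℝ × ℝ) : Prop :=
  IsSolution P Q γ ∧ (∃ T > 0, Function.Periodic γ T) ∧ ¬(∀ t, γ t = γ 0)

/-- A limit cycle: a periodic orbit whose image has a neighborhood containing
the image of no periodic orbit other than itself. -/
def IsLimitCycle (P Q : ℝ × ℝ → ℝ) (γ : ℝ → ℝ × ℝ) : Prop :=
  IsPeriodicOrbit P Q γ ∧
    ∃ U : Set (ℝ × ℝ), IsOpen U ∧ Set.range γ ⊆ U ∧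
      ∀ γ' : ℝ → ℝ × ℝ, IsPeriodicOrbit P Q γ' → Set.range γ' ⊆ U →
        Set.range γ' = Set.range γ

/-- `T` is the minimal (positive) period of `γ`. -/
def IsMinimalPeriod (γ : ℝ → ℝ × ℝ) (T : ℝ) : Prop :=
  0 < T ∧ Function.Periodic γ T ∧ ∀ T', 0 < T' → Function.Periodic γ T' → T ≤ T'

lemma pd_form (φ ψ : ℝ → ℝ) (φ' ψ' : ℝ) (x y : ℝ)
    (hφ : HasDerivAt φ φ' x) (hψ : HasDerivAt ψ ψ' x) :
    pdx (fun v : ℝ × ℝ => φ v.1 + ψ v.1 * v.2 + v.2 ^ 2) (x, y) = φ' + ψ' * y ∧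
    pdy (fun v : ℝ × ℝ => φ v.1 + ψ v.1 * v.2 + v.2 ^ 2) (x, y) = ψ x + 2 * y := by
  have h1 : HasFDerivAt (fun v : ℝ × ℝ => φ v.1)
      (φ' • ContinuousLinearMap.fst ℝ ℝ ℝ) (x, y) :=
    hφ.comp_hasFDerivAt _ hasFDerivAt_fst
  have h2 : HasFDerivAt (fun v : ℝ × ℝ => ψ v.1)
      (ψ' • ContinuousLinearMap.fst ℝ ℝ ℝ) (x, y) :=
    hψ.comp_hasFDerivAt _ hasFDerivAt_fst
  have h3 : HasFDerivAt (fun v : ℝ × ℝ => v.2) (ContinuousLinearMap.snd ℝ ℝ ℝ) (x, y) :=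
    hasFDerivAt_snd
  have h := (h1.add (h2.mul h3)).add (h3.mul h3)
  rw [show (((fun v : ℝ × ℝ => φ v.1) + (fun v : ℝ × ℝ => ψ v.1) * fun v : ℝ × ℝ => v.2) + (fun v : ℝ × ℝ => v.2) * fun v : ℝ × ℝ => v.2)
      = (fun v : ℝ × ℝ => φ v.1 + ψ v.1 * v.2 + v.2 ^ 2) from funext fun v => by simp only [Pi.add_apply, Pi.mul_apply]; ring] at h
  constructor
  · rw [pdx, h.fderiv]
    simp [ContinuousLinearMap.add_apply, ContinuousLinearMap.smul_apply]
    ring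
  · rw [pdy, h.fderiv]
    simp [ContinuousLinearMap.add_apply, ContinuousLinearMap.smul_apply]
    ring

lemma pdy_of_fst (f : ℝ → ℝ) (v : ℝ × ℝ) : pdy (fun w : ℝ × ℝ => f w.1) v = 0 := by
  by_cases h : DifferentiableAt ℝ (fun w : ℝ × ℝ => f w.1) v
  · have hc : HasDerivAt (fun t : ℝ => ((v.1, t) : ℝ × ℝ)) ((0 : ℝ), (1 : ℝ)) v.2 := by
      simpa using ((hasDerivAt_const v.2 v.1).prodMk (hasDerivAt_id v.2))
    have h2 := h.hasFDerivAt.comp_hasDerivAt (x := v.2) (by simpa using hc)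
    have h3 : HasDerivAt (fun _ : ℝ => f v.1) (fderiv ℝ (fun w : ℝ × ℝ => f w.1) v (0, 1)) v.2 := by
      simpa [Function.comp_def] using h2
    simpa [pdy] using h3.unique (hasDerivAt_const _ _)
  · rw [pdy, fderiv_zero_of_not_differentiableAt h]; simp

lemma pdxP' (F : ℝ → ℝ) (F' : ℝ) (x y : ℝ) (hF : HasDerivAt F F' x) :
    pdx (fun v : ℝ × ℝ => v.2 - F v.1) (x, y) = -F' := by
  have h1 : HasFDerivAt (fun v : ℝ × ℝ => F v.1)
      (F' • ContinuousLinearMap.fst ℝ ℝ ℝ) (x, y) :=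
    hF.comp_hasFDerivAt _ hasFDerivAt_fst
  have h := (hasFDerivAt_snd (𝕜 := ℝ) (E := ℝ) (F := ℝ)).sub h1
  rw [pdx, show (fun v : ℝ × ℝ => v.2 - F v.1) = (Prod.snd - fun v : ℝ × ℝ => F v.1) from rfl, h.fderiv]
  simp

/-- Explicit formula for `M_s` for the generalized Liénard system
`ẋ = y − F(x), ẏ = −g(x)` with `V₂` as in Corollary 2, and the particular case `s = −1`. -/
theorem stmt7 (F g : ℝ → ℝ) (hF : ContDiff ℝ 1 F) (hg : Continuous g)
    (G : ℝ → ℝ) (hG : ∀ x, G x = ∫ z in (0:ℝ)..x, g z)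
    (s c₀ c₁ : ℝ)
    (P Q : ℝ × ℝ → ℝ)
    (hP : ∀ v : ℝ × ℝ, P v = v.2 - F v.1) (hQ : ∀ v : ℝ × ℝ, Q v = -g v.1)
    (V₂ : ℝ × ℝ → ℝ)
    (hV₂ : ∀ v : ℝ × ℝ, V₂ v = (s * (s + 1) / 2 * (F v.1) ^ 2 + c₁ * s * F v.1
        + 2 * G v.1 + c₀) + (s * F v.1 + c₁) * v.2 + v.2 ^ 2)
    (W₂ : ℝ × ℝ → ℝ)
    (hW₂ : ∀ v : ℝ × ℝ, W₂ v = (-c₁ * F v.1 + 2 * G v.1 + c₀)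
        + (-F v.1 + c₁) * v.2 + v.2 ^ 2) :
    (∀ v : ℝ × ℝ,
      pdx V₂ v * P v + pdy V₂ v * Q v + s * V₂ v * (pdx P v + pdy Q v)
        = -(s * (s + 1) * (s + 2) / 2) * (F v.1) ^ 2 * deriv F v.1
          - s * (s + 1) * c₁ * F v.1 * deriv F v.1
          - (s + 2) * g v.1 * F v.1
          - 2 * s * deriv F v.1 * G v.1
          - s * c₀ * deriv F v.1
          - c₁ * g v.1) ∧
    (∀ v : ℝ × ℝ,
      pdx W₂ v * P v + pdy W₂ v * Q v + (-1 : ℝ) * W₂ v * (pdx P v + pdy Q v)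
        = 2 * deriv F v.1 * G v.1 + c₀ * deriv F v.1 - g v.1 * F v.1
          - c₁ * g v.1) := by
  have hPf : P = fun v : ℝ × ℝ => v.2 - F v.1 := funext hP
  have hQf : Q = fun v : ℝ × ℝ => (fun x => -g x) v.1 := funext hQ
  have hGf : G = fun u => ∫ z in (0:ℝ)..u, g z := funext hG
  have hF' : ∀ x, HasDerivAt F (deriv F x) x :=
    fun x => (hF.differentiable one_ne_zero x).hasDerivAt
  have hG' : ∀ x, HasDerivAt G (g x) x := fun x => by
    rw [hGf]; exact (hg.integral_hasStrictDerivAt 0 x).hasDerivAt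
  have hPx : ∀ v : ℝ × ℝ, pdx P v = -deriv F v.1 := by
    rintro ⟨x, y⟩
    rw [hPf]; exact pdxP' F _ x y (hF' x)
  have hQy : ∀ v : ℝ × ℝ, pdy Q v = 0 := by
    intro v; rw [hQf]; exact pdy_of_fst (fun x => -g x) v
  constructor
  · rintro ⟨x, y⟩
    have hφ : HasDerivAt (fun x => s * (s + 1) / 2 * (F x) ^ 2 + c₁ * s * F x
        + 2 * G x + c₀)
        (s * (s + 1) / 2 * (2 * F x * deriv F x) + c₁ * s * deriv F x + 2 * g x) x := by
      exact ((((((hF' x).pow 2).const_mul (s * (s + 1) / 2)).add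
        ((hF' x).const_mul (c₁ * s))).add ((hG' x).const_mul 2)).add_const c₀).congr_deriv
        (by push_cast; ring)
    have hψ : HasDerivAt (fun x => s * F x + c₁) (s * deriv F x) x :=
      ((hF' x).const_mul s).add_const c₁
    have hVf : V₂ = fun v : ℝ × ℝ => (fun x => s * (s + 1) / 2 * (F x) ^ 2 + c₁ * s * F x
        + 2 * G x + c₀) v.1 + (fun x => s * F x + c₁) v.1 * v.2 + v.2 ^ 2 := funext hV₂
    obtain ⟨hx, hy⟩ := pd_form _ _ _ _ x y hφ hψ
    rw [hVf]
    rw [hx, hy, hPx (x, y), hQy (x, y), hP (x, y), hQ (x, y)]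
    simp only
    ring
  · rintro ⟨x, y⟩
    have hφ : HasDerivAt (fun x => -c₁ * F x + 2 * G x + c₀)
        (-c₁ * deriv F x + 2 * g x) x :=
      (((hF' x).const_mul (-c₁)).add ((hG' x).const_mul 2)).add_const c₀
    have hψ : HasDerivAt (fun x => -F x + c₁) (-deriv F x) x :=
      (hF' x).neg.add_const c₁
    have hWf : W₂ = fun v : ℝ × ℝ => (fun x => -c₁ * F x + 2 * G x + c₀) v.1
        + (fun x => -F x + c₁) v.1 * v.2 + v.2 ^ 2 := funext hW₂
    obtain ⟨hx, hy⟩ := pd_form _ _ _ _ x y hφ hψ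
    rw [hWf]
    rw [hx, hy, hPx (x, y), hQy (x, y), hP (x, y), hQ (x, y)]
    simp only
    ring
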